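/- There is no rational number r, integer l, and constant C > 0 such that (1/C)·x^r·(log x)^l ≤ x·log(log x) ≤ C·x^r·(log x)^l for all sufficiently large x. In particular, the function x ↦ x·(log x − log log x) − x + x² is not asymptotically equivalent (up to multiplicative constants) to any function of the form x^r (log x)^l at infinity. -/

import Mathlib

open Filter Real Asymptotics

private lemma loglog_littleO : (fun t => Real.log (Real.log t)) =o[atTop] (fun t : ℝ => t) := by
  have hO : (fun t => Real.log (Real.log t)) =O[atTop] Real.log := by
    apply Asymptotics.IsBigO.of_bound 1
    filter_upwards [Filter.eventually_ge_atTop (Real.exp 1)] with t ht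
    have h1 : (1 : ℝ) ≤ Real.log t := by
      have := Real.log_le_log (Real.exp_pos 1) ht
      rwa [Real.log_exp] at this
    have h2 : Real.log (Real.log t) ≤ Real.log t := Real.log_le_self (by linarith)
    have h3 : 0 ≤ Real.log (Real.log t) := by
      have := Real.log_le_log one_pos h1
      simpa using this
    rw [one_mul, Real.norm_eq_abs, Real.norm_eq_abs, abs_of_nonneg h3,
      abs_of_nonneg (by linarith)]
    exact h2
  exact hO.trans_isLittleO Real.isLittleO_log_id_atTop

private lemma aux_tendsto (a b c : ℝ) (ha : a ≠ 0) :
    Tendsto (fun t => a * t + (b * Real.log t + c * Real.log (Real.log t))) atTop atTop ∨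
    Tendsto (fun t => a * t + (b * Real.log t + c * Real.log (Real.log t))) atTop atBot := by
  have h1 : Real.log =o[atTop] (fun t : ℝ => t) := Real.isLittleO_log_id_atTop
  have hrest : (fun t => b * Real.log t + c * Real.log (Real.log t)) =o[atTop]
      (fun t : ℝ => a * t) := by
    have := (h1.const_mul_left b).add (loglog_littleO.const_mul_left c)
    exact this.trans_isBigO ((Asymptotics.isBigO_self_const_mul (c := a) ha _ _))
  have hequiv : (fun t => a * t + (b * Real.log t + c * Real.log (Real.log t))) ~[atTop]
      (fun t : ℝ => a * t) := by
    have : (fun t : ℝ => a * t) ~[atTop] (fun t : ℝ => a * t) := IsEquivalent.refl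
    simpa [Pi.add_def] using this.add_isLittleO hrest
  rcases ha.lt_or_gt with h | h
  · right
    have : Tendsto (fun t : ℝ => a * t) atTop atBot :=
      Tendsto.const_mul_atTop_of_neg h tendsto_id
    exact hequiv.symm.tendsto_atBot this
  · left
    have : Tendsto (fun t : ℝ => a * t) atTop atTop :=
      Tendsto.const_mul_atTop h tendsto_id
    exact hequiv.symm.tendsto_atTop this

/-- There is no rational `r`, integer `l` and constant `C > 0` such that
`(1/C)·x^r·(log x)^l ≤ x·log(log x) ≤ C·x^r·(log x)^l` for all sufficiently large `x`. -/
theorem stmt11 : ¬ ∃ (r : ℚ) (l : ℤ) (C : ℝ), 0 < C ∧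
    ∀ᶠ x : ℝ in Filter.atTop,
      (1 / C) * x ^ ((r : ℝ)) * (Real.log x) ^ l ≤ x * Real.log (Real.log x) ∧
      x * Real.log (Real.log x) ≤ C * x ^ ((r : ℝ)) * (Real.log x) ^ l := by
  rintro ⟨r, l, C, hC, hev⟩
  set g : ℝ → ℝ := fun x =>
    (1 - (r : ℝ)) * Real.log x - (l : ℝ) * Real.log (Real.log x) +
      Real.log (Real.log (Real.log x)) with hg
  -- boundedness of g
  have hb : ∀ᶠ x : ℝ in atTop, -Real.log C ≤ g x ∧ g x ≤ Real.log C := by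
    filter_upwards [hev, eventually_ge_atTop (Real.exp (Real.exp 2))] with x hx hx2
    obtain ⟨hlo, hhi⟩ := hx
    have hx0 : (0 : ℝ) < x := lt_of_lt_of_le (Real.exp_pos _) hx2
    have hlx : Real.exp 2 ≤ Real.log x := by
      have := Real.log_le_log (Real.exp_pos _) hx2
      rwa [Real.log_exp] at this
    have he2 : (3 : ℝ) ≤ Real.exp 2 := by
      have := Real.add_one_le_exp (2 : ℝ); linarith
    have hlx0 : (0 : ℝ) < Real.log x := by linarith
    have hllx : (2 : ℝ) ≤ Real.log (Real.log x) := by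
      have := Real.log_le_log (Real.exp_pos 2) hlx
      rwa [Real.log_exp] at this
    have hllx0 : (0 : ℝ) < Real.log (Real.log x) := by linarith
    have hm : (0 : ℝ) < x * Real.log (Real.log x) := mul_pos hx0 hllx0
    have hrp : (0 : ℝ) < x ^ ((r : ℝ)) := Real.rpow_pos_of_pos hx0 _
    have hzp : (0 : ℝ) < (Real.log x) ^ l := zpow_pos hlx0 _
    have hA : (0 : ℝ) < (1 / C) * x ^ ((r : ℝ)) * (Real.log x) ^ l := by positivity
    have hB : (0 : ℝ) < C * x ^ ((r : ℝ)) * (Real.log x) ^ l := by positivity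
    have hlogm : Real.log (x * Real.log (Real.log x)) =
        Real.log x + Real.log (Real.log (Real.log x)) :=
      Real.log_mul (ne_of_gt hx0) (ne_of_gt hllx0)
    have hlogA : Real.log ((1 / C) * x ^ ((r : ℝ)) * (Real.log x) ^ l) =
        -Real.log C + (r : ℝ) * Real.log x + (l : ℝ) * Real.log (Real.log x) := by
      rw [Real.log_mul (by positivity) (ne_of_gt hzp), Real.log_mul (by positivity) (ne_of_gt hrp),
        Real.log_rpow hx0, Real.log_zpow, one_div, Real.log_inv]
    have hlogB : Real.log (C * x ^ ((r : ℝ)) * (Real.log x) ^ l) =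
        Real.log C + (r : ℝ) * Real.log x + (l : ℝ) * Real.log (Real.log x) := by
      rw [Real.log_mul (by positivity) (ne_of_gt hzp), Real.log_mul (by positivity) (ne_of_gt hrp),
        Real.log_rpow hx0, Real.log_zpow]
    have h1 := Real.log_le_log hA hlo
    have h2 := Real.log_le_log hm hhi
    rw [hlogA, hlogm] at h1
    rw [hlogB, hlogm] at h2
    have hgx : g x = Real.log x + Real.log (Real.log (Real.log x)) -
        ((r : ℝ) * Real.log x + (l : ℝ) * Real.log (Real.log x)) := by
      rw [hg]; ring
    constructor <;> rw [hgx] <;> linarith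
  -- g tends to atTop or atBot
  have ht : Tendsto g atTop atTop ∨ Tendsto g atTop atBot := by
    by_cases hr : (r : ℝ) = 1
    · by_cases hl : (l : ℝ) = 0
      · left
        have hgeq : g = fun x => Real.log (Real.log (Real.log x)) := by
          funext x; rw [hg]; simp [hr, hl]
        rw [hgeq]
        exact Real.tendsto_log_atTop.comp (Real.tendsto_log_atTop.comp Real.tendsto_log_atTop)
      · have hgeq : g = (fun t => (-(l : ℝ)) * t + ((1 : ℝ) * Real.log t +
            (0 : ℝ) * Real.log (Real.log t))) ∘ (fun x => Real.log (Real.log x)) := by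
          funext x; simp only [hg, Function.comp, hr]; ring
        have hcomp : Tendsto (fun x : ℝ => Real.log (Real.log x)) atTop atTop :=
          Real.tendsto_log_atTop.comp Real.tendsto_log_atTop
        rcases aux_tendsto (-(l : ℝ)) 1 0 (by simpa using hl) with h | h
        · left; rw [hgeq]; exact h.comp hcomp
        · right; rw [hgeq]; exact h.comp hcomp
    · have hgeq : g = (fun t => (1 - (r : ℝ)) * t + ((-(l : ℝ)) * Real.log t +
          (1 : ℝ) * Real.log (Real.log t))) ∘ Real.log := by
        funext x; simp only [hg, Function.comp]; ring
      have ha : (1 - (r : ℝ)) ≠ 0 := by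
        intro h; apply hr; linarith [sub_eq_zero.mp h]
      rcases aux_tendsto (1 - (r : ℝ)) (-(l : ℝ)) 1 ha with h | h
      · left; rw [hgeq]; exact h.comp Real.tendsto_log_atTop
      · right; rw [hgeq]; exact h.comp Real.tendsto_log_atTop
  rcases ht with h | h
  · have := (h.eventually_gt_atTop (Real.log C)).and hb
    rcases this.exists with ⟨x, h1, _, h3⟩
    linarith
  · have := (h.eventually_lt_atBot (-Real.log C)).and hb
    rcases this.exists with ⟨x, h1, h2, _⟩
    linarith
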